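/- arXiv:2008.06122 — 2 statements merged into one kernel-verified Lean document; each statement's English description precedes it below -/
import Mathlib

section
/- For every real y with 1 < y ≤ 7/2, we have y + (1 - y) * ln(y) > 0. -/
theorem stmt2 (y : ℝ) (h1 : 1 < y) (h2 : y ≤ 7/2) : y + (1 - y) * Real.log y > 0 := by
  set t := Real.sqrt y with ht
  have hy0 : (0:ℝ) < y := by linarith
  have ht1 : 1 < t := by
    rw [ht, show (1:ℝ) = Real.sqrt 1 by simp]
    exact Real.sqrt_lt_sqrt (by norm_num) h1
  have ht2 : t ^ 2 = y := Real.sq_sqrt hy0.le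
  have ht0 : 0 < t := by linarith
  have hsinh := Real.self_lt_sinh_iff.mpr (Real.log_pos ht1)
  rw [Real.sinh_eq] at hsinh
  have hexp : Real.exp (Real.log t) = t := Real.exp_log ht0
  have hexpneg : Real.exp (-Real.log t) = t⁻¹ := by
    rw [Real.exp_neg, hexp]
  rw [hexp, hexpneg] at hsinh
  have hlogy : Real.log y = 2 * Real.log t := by
    rw [← ht2, Real.log_pow]; push_cast; ring
  have hlog : Real.log y < t - t⁻¹ := by
    rw [hlogy]; linarith
  have hinv : t * t⁻¹ = 1 := mul_inv_cancel₀ ht0.ne'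
  have hpoly : t ^ 4 + 1 ≤ t ^ 3 + 2 * t ^ 2 := by
    nlinarith [sq_nonneg (t - 1), sq_nonneg (t^2 - 7/2), sq_nonneg t, ht2]
  have hy1 : 0 < y - 1 := by linarith
  have hkey : (y - 1) * Real.log y < (y - 1) * (t - t⁻¹) :=
    mul_lt_mul_of_pos_left hlog hy1
  have h2' : t ^ 2 ≤ 7/2 := by rw [ht2]; exact h2
  have hfin : (y - 1) * (t - t⁻¹) ≤ y := by
    rw [← ht2]
    have e : (t ^ 2 - 1) * (t - t⁻¹) * t = (t ^ 2 - 1) ^ 2 := by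
      field_simp
    nlinarith [hpoly, ht0, e]
  nlinarith [hkey, hfin]
end

section
/- For every real z in the closed interval [0, ln(2)], we have -z ≤ ln(1 - z/(2*ln(2))). -/
theorem stmt8 (z : ℝ) (h0 : 0 ≤ z) (h1 : z ≤ Real.log 2) :
    -z ≤ Real.log (1 - z / (2 * Real.log 2)) := by
  have hl2 : (0:ℝ) < Real.log 2 := Real.log_pos (by norm_num)
  set t := z / Real.log 2 with ht
  have ht0 : 0 ≤ t := div_nonneg h0 hl2.le
  have ht1 : t ≤ 1 := (div_le_one hl2).2 h1
  have htz : t * Real.log 2 = z := div_mul_cancel₀ z hl2.ne'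
  have key : Real.exp (-z) ≤ 1 - z / (2 * Real.log 2) := by
    have hc := convexOn_exp.2 (Set.mem_univ (-Real.log 2)) (Set.mem_univ 0)
      ht0 (by linarith : (0:ℝ) ≤ 1 - t) (by ring : t + (1 - t) = 1)
    simp only [smul_eq_mul, mul_zero, add_zero, Real.exp_zero, mul_one] at hc
    have h1' : t * -Real.log 2 = -z := by rw [mul_neg, htz]
    rw [h1', show Real.exp (-Real.log 2) = 2⁻¹ by rw [Real.exp_neg, Real.exp_log]; norm_num] at hc
    have h2 : z / (2 * Real.log 2) = t / 2 := by
      rw [ht]; ring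
    rw [h2]
    linarith
  have hpos : 0 < 1 - z / (2 * Real.log 2) := lt_of_lt_of_le (Real.exp_pos _) key
  exact (Real.le_log_iff_exp_le hpos).2 key
end
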